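/- Let A be a commutative algebra, I an abstract continuity ideal in A, and {P_α : α ∈ S} a family of prime ideals each of the form (I : a_α) for some a_α ∈ A. Then the intersection ⋂_{α ∈ S} P_α is also an abstract continuity ideal in A. -/
import Mathlib


/-- The quotient ideal `(J : a) = {x | a * x ∈ J}`. -/
def quotIdeal {A : Type*} [CommRing A] (J : Ideal A) (a : A) : Ideal A where
  carrier := {x | a * x ∈ J}
  zero_mem' := by simp
  add_mem' := by
    intro x y hx hy
    simpa [mul_add] using J.add_mem hx hy
  smul_mem' := by
    intro c x hx
    simp only [smul_eq_mul, Set.mem_setOf_eq, mul_left_comm a c x] at *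
    exact J.mul_mem_left c hx

/-- An ideal `I` is an abstract continuity ideal if for every sequence
`(a n)` the increasing chain of quotient ideals eventually stabilizes. -/
def AbstractContinuityIdeal {A : Type*} [CommRing A] (I : Ideal A) : Prop :=
  ∀ a : ℕ → A, ∃ n₀ : ℕ, ∀ n ≥ n₀,
    quotIdeal I (∏ i ∈ Finset.range n, a i) =
      quotIdeal I (∏ i ∈ Finset.range (n + 1), a i)

lemma mem_quotIdeal {A : Type*} [CommRing A] (J : Ideal A) (c x : A) :
    x ∈ quotIdeal J c ↔ c * x ∈ J := Iff.rfl

/-- If `I` is an abstract continuity ideal and `(P α)` is a family of prime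
ideals, each of the form `(I : a α)`, then `⋂ α, P α` is also an abstract
continuity ideal. -/
theorem iInf_of_prime_quotIdeals_is_ACI {A : Type*} [CommRing A]
    (I : Ideal A) (hI : AbstractContinuityIdeal I)
    {S : Type*} (a : S → A)
    (hprime : ∀ α : S, (quotIdeal I (a α)).IsPrime) :
    AbstractContinuityIdeal (⨅ α : S, quotIdeal I (a α)) := by
  intro b
  obtain ⟨n₀, h⟩ := hI b
  refine ⟨n₀, fun n hn => ?_⟩
  set c := ∏ i ∈ Finset.range n, b i with hc
  have hsucc : ∏ i ∈ Finset.range (n + 1), b i = c * b n := by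
    rw [Finset.prod_range_succ]
  have key := h n hn
  ext x
  simp only [mem_quotIdeal, Ideal.mem_iInf, hsucc]
  constructor
  · intro hx α
    have : a α * (c * x) ∈ I := hx α
    have h1 : x * a α ∈ quotIdeal I c := by
      rw [mem_quotIdeal, show c * (x * a α) = a α * (c * x) by ring]
      exact this
    rw [key, hsucc] at h1
    rw [mem_quotIdeal] at h1
    show a α * (c * b n * x) ∈ I
    rwa [show c * b n * (x * a α) = a α * (c * b n * x) by ring] at h1
  · intro hx α
    have h1 : x * a α ∈ quotIdeal I (c * b n) := by
      rw [mem_quotIdeal]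
      have : a α * (c * b n * x) ∈ I := hx α
      rwa [show a α * (c * b n * x) = c * b n * (x * a α) by ring] at this
    rw [hsucc] at key
    rw [← key, mem_quotIdeal] at h1
    show a α * (c * x) ∈ I
    rwa [show c * (x * a α) = a α * (c * x) by ring] at h1
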